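/- arXiv:1607.00713 — 4 statements merged into one kernel-verified Lean document; each statement's English description precedes it below -/
import Mathlib

section
/- Let (R, α) be a regular Hom-Lie conformal algebra and s a fixed integer. Then R with the λ-action a_λ b := [α^s(a)_λ b] and the map α is a module over (R, α). -/
open Polynomial

/-- A Hom-Lie conformal algebra.  The carrier `R` is a `ℂ[∂]`-module (here the
action of `∂` is the action of `Polynomial.X`), `alpha` is a `ℂ[∂]`-linear map
(so it is `ℂ`-linear and commutes with `∂`), and the λ-bracket is modelled as a
family of `ℂ`-bilinear maps indexed by `λ ∈ ℂ[∂]` (so that substitutions such as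
`λ ↦ -∂-λ` make sense). -/
structure HLCA (R : Type*) [AddCommGroup R] [Module (Polynomial ℂ) R] where
  alpha : R →ₗ[Polynomial ℂ] R
  br : Polynomial ℂ → R → R → R
  br_add_left : ∀ l a a' b, br l (a + a') b = br l a b + br l a' b
  br_add_right : ∀ l a b b', br l a (b + b') = br l a b + br l a b'
  br_smul_left : ∀ l (c : ℂ) a b, br l ((C c) • a) b = (C c) • br l a b
  br_smul_right : ∀ l (c : ℂ) a b, br l a ((C c) • b) = (C c) • br l a b
  sesq_left : ∀ l a b, br l ((X : Polynomial ℂ) • a) b = (-l) • br l a b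
  sesq_right : ∀ l a b,
    br l a ((X : Polynomial ℂ) • b) = ((X : Polynomial ℂ) + l) • br l a b
  skew : ∀ l a b, br l a b = - br (-(X : Polynomial ℂ) - l) b a
  jacobi : ∀ l m a b c,
    br l (alpha a) (br m b c)
      = br (l + m) (br l a b) (alpha c) + br m (alpha b) (br l a c)

/-- A Hom-Lie conformal algebra is multiplicative if `α` is a homomorphism for
the λ-bracket. -/
def HLCA.Multiplicative {R : Type*} [AddCommGroup R] [Module (Polynomial ℂ) R]
    (L : HLCA R) : Prop :=
  ∀ l a b, L.alpha (L.br l a b) = L.br l (L.alpha a) (L.alpha b)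
/-- A module `(M, β)` over a Hom-Lie conformal algebra `(R, α)`. -/
structure HLCAMod {R : Type*} [AddCommGroup R] [Module (Polynomial ℂ) R]
    (L : HLCA R) (M : Type*) [AddCommGroup M] [Module (Polynomial ℂ) M] where
  beta : M →ₗ[Polynomial ℂ] M
  act : Polynomial ℂ → R → M → M
  act_add_left : ∀ l a a' v, act l (a + a') v = act l a v + act l a' v
  act_add_right : ∀ l a v w, act l a (v + w) = act l a v + act l a w
  act_smul_left : ∀ l (c : ℂ) a v, act l ((C c) • a) v = (C c) • act l a v
  act_smul_right : ∀ l (c : ℂ) a v, act l a ((C c) • v) = (C c) • act l a v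
  act_sesq_left : ∀ l a v, act l ((X : Polynomial ℂ) • a) v = (-l) • act l a v
  act_sesq_right : ∀ l a v,
    act l a ((X : Polynomial ℂ) • v) = ((X : Polynomial ℂ) + l) • act l a v
  act_compat : ∀ l m a b v,
    act l (L.alpha a) (act m b v) - act m (L.alpha b) (act l a v)
      = act (l + m) (L.br l a b) (beta v)
  beta_act : ∀ l a v, beta (act l a v) = act l (L.alpha a) (beta v)


lemma hlca_symm_mult {R : Type*} [AddCommGroup R] [Module (Polynomial ℂ) R]
    (L : HLCA R) (hL : L.Multiplicative)
    (e : R ≃ₗ[Polynomial ℂ] R) (he : ∀ a, e a = L.alpha a) :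
    ∀ l a b, e.symm (L.br l a b) = L.br l (e.symm a) (e.symm b) := by
  intro l a b
  apply e.injective
  rw [e.apply_symm_apply, he, hL, ← he, ← he, e.apply_symm_apply, e.apply_symm_apply]

lemma hlca_zpow_mult {R : Type*} [AddCommGroup R] [Module (Polynomial ℂ) R]
    (L : HLCA R) (hL : L.Multiplicative)
    (e : R ≃ₗ[Polynomial ℂ] R) (he : ∀ a, e a = L.alpha a) :
    ∀ (n : ℤ) (l : Polynomial ℂ) a b,
      (e ^ n) (L.br l a b) = L.br l ((e ^ n) a) ((e ^ n) b) := by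
  intro n
  induction n using Int.induction_on with
  | zero => intro l a b; simp
  | succ k ih =>
    intro l a b
    have h1 : ((k : ℤ) + 1) = 1 + k := by ring
    rw [h1, zpow_add, zpow_one]
    show e ((e ^ (k : ℤ)) (L.br l a b)) = _
    rw [ih, he, hL, ← he, ← he]
    rfl
  | pred k ih =>
    intro l a b
    have h1 : (-(k : ℤ) - 1) = -1 + -k := by ring
    rw [h1, zpow_add, zpow_neg_one]
    show e⁻¹ ((e ^ (-(k : ℤ))) (L.br l a b)) = _
    rw [ih]
    exact hlca_symm_mult L hL e he _ _ _

lemma hlca_zpow_alpha {R : Type*} [AddCommGroup R] [Module (Polynomial ℂ) R]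
    (L : HLCA R)
    (e : R ≃ₗ[Polynomial ℂ] R) (he : ∀ a, e a = L.alpha a) :
    ∀ (n : ℤ) a, (e ^ n) (L.alpha a) = L.alpha ((e ^ n) a) := by
  intro n a
  rw [← he, ← he]
  have : (e ^ n) * e = e * (e ^ n) := by
    rw [← zpow_one_add, ← zpow_add_one]; ring_nf
  calc (e ^ n) (e a) = ((e ^ n) * e) a := rfl
    _ = (e * (e ^ n)) a := by rw [this]
    _ = e ((e ^ n) a) := rfl

/-- Let `(R, α)` be a regular Hom-Lie conformal algebra
(`α` is a bijective homomorphism, modelled by the linear equivalence `e`) and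
`s` a fixed integer.  Then `R` with the λ-action `a_λ b := [α^s(a)_λ b]` and
the map `α` is a module over `(R, α)`. -/
theorem stmt3 {R : Type*} [AddCommGroup R] [Module (Polynomial ℂ) R]
    (L : HLCA R) (hL : L.Multiplicative)
    (e : R ≃ₗ[Polynomial ℂ] R) (he : ∀ a, e a = L.alpha a) (s : ℤ) :
    ∃ Mo : HLCAMod L R,
      Mo.beta = L.alpha ∧ ∀ l a b, Mo.act l a b = L.br l ((e ^ s) a) b := by
  refine ⟨{ beta := L.alpha
            act := fun l a b => L.br l ((e ^ s) a) b
            act_add_left := by intro l a a' v; rw [map_add, L.br_add_left]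
            act_add_right := by intro l a v w; rw [L.br_add_right]
            act_smul_left := by intro l c a v; rw [map_smul, L.br_smul_left]
            act_smul_right := by intro l c a v; rw [L.br_smul_right]
            act_sesq_left := by intro l a v; rw [map_smul, L.sesq_left]
            act_sesq_right := by intro l a v; rw [L.sesq_right]
            act_compat := ?_
            beta_act := ?_ }, rfl, fun l a b => rfl⟩
  · intro l m a b v
    rw [hlca_zpow_alpha L e he s a, hlca_zpow_alpha L e he s b,
      hlca_zpow_mult L hL e he s l a b]
    have := L.jacobi l m ((e ^ s) a) ((e ^ s) b) v
    rw [this]; abel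
  · intro l a v
    rw [hlca_zpow_alpha L e he s a]
    exact hL l _ v
end

section
/- Let (R, α) be a multiplicative Hom-Lie conformal algebra and a ∈ R with α(a) = a. Then the map D_k(a) defined by D_k(a)_λ(b) = [a_λ α^k(b)] is an α^{k+1}-derivation of R, i.e., it is a conformal linear map commuting with α and satisfying D_k(a)_λ([b_μ c]) = [(D_k(a)_λ(b))_{λ+μ} α^{k+1}(c)] + [α^{k+1}(b)_μ (D_k(a)_λ(c))]. -/
open Polynomial

/-- A conformal linear map `D : R → R[λ]`, modelled as a family `D_λ` indexed by
`λ ∈ ℂ[∂]`: `ℂ`-linear with `D_λ(∂a) = (∂+λ) D_λ(a)`. -/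
structure IsConfLin {R : Type*} [AddCommGroup R] [Module (Polynomial ℂ) R]
    (D : Polynomial ℂ → R → R) : Prop where
  map_add : ∀ l a b, D l (a + b) = D l a + D l b
  map_smul : ∀ l (c : ℂ) a, D l ((C c) • a) = (C c) • D l a
  conf : ∀ l a, D l ((X : Polynomial ℂ) • a) = ((X : Polynomial ℂ) + l) • D l a

/-- Membership in `Ω = {D ∈ Cend(R) | D_λ ∘ α = α ∘ D_λ}`. -/
def InOmega {R : Type*} [AddCommGroup R] [Module (Polynomial ℂ) R]
    (L : HLCA R) (D : Polynomial ℂ → R → R) : Prop :=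
  IsConfLin D ∧ ∀ l a, D l (L.alpha a) = L.alpha (D l a)

/-- `D` is an `α^k`-derivation of `(R, α)`. -/
def IsDer {R : Type*} [AddCommGroup R] [Module (Polynomial ℂ) R]
    (L : HLCA R) (k : ℕ) (D : Polynomial ℂ → R → R) : Prop :=
  InOmega L D ∧
    ∀ l m a b,
      D l (L.br m a b)
        = L.br (l + m) (D l a) ((⇑L.alpha)^[k] b)
          + L.br m ((⇑L.alpha)^[k] a) (D l b)

/-- The conformal commutator `[D_λ H]_μ(a) = D_λ(H_{μ−λ}(a)) − H_{μ−λ}(D_λ(a))`. -/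
noncomputable def cComm {R : Type*} [AddCommGroup R] [Module (Polynomial ℂ) R]
    (D H : Polynomial ℂ → R → R) (l m : Polynomial ℂ) (a : R) : R :=
  D l (H (m - l) a) - H (m - l) (D l a)

lemma iter_smul {R : Type*} [AddCommGroup R] [Module (Polynomial ℂ) R]
    (L : HLCA R) (k : ℕ) (p : Polynomial ℂ) (b : R) :
    (⇑L.alpha)^[k] (p • b) = p • (⇑L.alpha)^[k] b := by
  induction k with
  | zero => simp
  | succ n ih => simp [Function.iterate_succ_apply', ih, map_smul]

lemma iter_br {R : Type*} [AddCommGroup R] [Module (Polynomial ℂ) R]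
    (L : HLCA R) (hL : L.Multiplicative) (k : ℕ) (m : Polynomial ℂ) (b c : R) :
    (⇑L.alpha)^[k] (L.br m b c) = L.br m ((⇑L.alpha)^[k] b) ((⇑L.alpha)^[k] c) := by
  induction k with
  | zero => rfl
  | succ n ih => simp only [Function.iterate_succ_apply']; rw [ih, hL]

/-- Let `(R, α)` be a multiplicative Hom-Lie conformal algebra
and `a ∈ R` with `α(a) = a`.  Then `D_k(a)_λ(b) = [a_λ α^k(b)]` is an
`α^{k+1}`-derivation of `R`. -/
theorem stmt7 {R : Type*} [AddCommGroup R] [Module (Polynomial ℂ) R]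
    (L : HLCA R) (hL : L.Multiplicative) (a : R) (ha : L.alpha a = a) (k : ℕ) :
    IsDer L (k + 1) (fun l b => L.br l a ((⇑L.alpha)^[k] b)) := by
  refine ⟨⟨⟨?_, ?_, ?_⟩, ?_⟩, ?_⟩
  · intro l b c; simp [L.br_add_right]
  · intro l c b; simp [iter_smul, L.br_smul_right]
  · intro l b; simp [iter_smul, L.sesq_right]
  · intro l b
    have h1 : (⇑L.alpha)^[k] (L.alpha b) = L.alpha ((⇑L.alpha)^[k] b) := by
      rw [← Function.iterate_succ_apply, Function.iterate_succ_apply']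
    simp only [h1]
    rw [hL, ha]
  · intro l m b c
    have := L.jacobi l m a ((⇑L.alpha)^[k] b) ((⇑L.alpha)^[k] c)
    rw [ha] at this
    simp only [iter_br L hL, this, Function.iterate_succ_apply']
end

section
/- Let (R, α) be a multiplicative Hom-Lie conformal algebra with α surjective, and let Z(R) be the center of R. Then for D₁ ∈ C_{α^k}(R) (a centroid element) and D₂ ∈ QC_{α^s}(R) (a quasicentroid element), the commutator [D₁_μ D₂] takes values in Z(R)[μ], i.e., [C(R)_λ QC(R)] ⊆ Chom(R, Z(R))[λ]. Moreover if Z(R) = 0 then [C(R)_λ QC(R)] = 0. -/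
open Polynomial

/-- `D` is a generalized `α^k`-derivation: there are `D', D'' ∈ Ω` with
`[(D_μ a)_{λ+μ} α^k(b)] + [α^k(a)_λ (D'_μ b)] = D''_μ([a_λ b])`. -/
def IsGDer {R : Type*} [AddCommGroup R] [Module (Polynomial ℂ) R]
    (L : HLCA R) (k : ℕ) (D : Polynomial ℂ → R → R) : Prop :=
  InOmega L D ∧
    ∃ D' D'', InOmega L D' ∧ InOmega L D'' ∧
      ∀ l m a b,
        L.br (l + m) (D m a) ((⇑L.alpha)^[k] b)
            + L.br l ((⇑L.alpha)^[k] a) (D' m b)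
          = D'' m (L.br l a b)

/-- `D` is an `α^k`-quasiderivation: there is `D' ∈ Ω` with
`[(D_μ a)_{λ+μ} α^k(b)] + [α^k(a)_λ (D_μ b)] = D'_μ([a_λ b])`. -/
def IsQDer {R : Type*} [AddCommGroup R] [Module (Polynomial ℂ) R]
    (L : HLCA R) (k : ℕ) (D : Polynomial ℂ → R → R) : Prop :=
  InOmega L D ∧
    ∃ D', InOmega L D' ∧
      ∀ l m a b,
        L.br (l + m) (D m a) ((⇑L.alpha)^[k] b)
            + L.br l ((⇑L.alpha)^[k] a) (D m b)
          = D' m (L.br l a b)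

/-- `D` is an `α^k`-centroid element:
`[(D_μ a)_{λ+μ} α^k(b)] = [α^k(a)_λ (D_μ b)] = D_μ([a_λ b])`. -/
def IsCentroid {R : Type*} [AddCommGroup R] [Module (Polynomial ℂ) R]
    (L : HLCA R) (k : ℕ) (D : Polynomial ℂ → R → R) : Prop :=
  InOmega L D ∧
    ∀ l m a b,
      L.br (l + m) (D m a) ((⇑L.alpha)^[k] b)
          = L.br l ((⇑L.alpha)^[k] a) (D m b) ∧
        L.br (l + m) (D m a) ((⇑L.alpha)^[k] b) = D m (L.br l a b)

/-- `D` is an `α^k`-quasicentroid element: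
`[(D_μ a)_{λ+μ} α^k(b)] = [α^k(a)_λ (D_μ b)]`. -/
def IsQC {R : Type*} [AddCommGroup R] [Module (Polynomial ℂ) R]
    (L : HLCA R) (k : ℕ) (D : Polynomial ℂ → R → R) : Prop :=
  InOmega L D ∧
    ∀ l m a b,
      L.br (l + m) (D m a) ((⇑L.alpha)^[k] b)
        = L.br l ((⇑L.alpha)^[k] a) (D m b)

/-- `D` is an `α^k`-central derivation:
`[(D_μ a)_{λ+μ} α^k(b)] = D_μ([a_λ b]) = 0`. -/
def IsZDer {R : Type*} [AddCommGroup R] [Module (Polynomial ℂ) R]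
    (L : HLCA R) (k : ℕ) (D : Polynomial ℂ → R → R) : Prop :=
  InOmega L D ∧
    ∀ l m a b,
      L.br (l + m) (D m a) ((⇑L.alpha)^[k] b) = 0 ∧ D m (L.br l a b) = 0

lemma br_sub_left' {R : Type*} [AddCommGroup R] [Module (Polynomial ℂ) R]
    (L : HLCA R) (l : Polynomial ℂ) (a a' b : R) :
    L.br l (a - a') b = L.br l a b - L.br l a' b := by
  have hneg : L.br l (-a') b = - L.br l a' b := by
    have h := L.br_smul_left l (-1) a' b
    simpa [neg_smul] using h
  rw [sub_eq_add_neg, L.br_add_left, hneg, sub_eq_add_neg]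

lemma omega_iter' {R : Type*} [AddCommGroup R] [Module (Polynomial ℂ) R]
    (L : HLCA R) {D : Polynomial ℂ → R → R} (hD : InOmega L D) (n : ℕ)
    (l : Polynomial ℂ) (a : R) :
    D l ((⇑L.alpha)^[n] a) = (⇑L.alpha)^[n] (D l a) := by
  induction n generalizing a with
  | zero => simp
  | succ n ih =>
    rw [Function.iterate_succ_apply', Function.iterate_succ_apply', hD.2, ih]


/-- Let `(R, α)` be a multiplicative Hom-Lie conformal algebra
with `α` surjective and `Z(R)` the center.  For `D₁ ∈ C_{α^k}(R)` and
`D₂ ∈ QC_{α^s}(R)` the commutator `[D₁_μ D₂]` takes values in `Z(R)[μ]`;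
moreover if `Z(R) = 0` then `[C(R)_λ QC(R)] = 0`. -/
theorem stmt16 {R : Type*} [AddCommGroup R] [Module (Polynomial ℂ) R]
    (L : HLCA R) (hL : L.Multiplicative)
    (hsurj : Function.Surjective L.alpha) (k s : ℕ)
    (D₁ D₂ : Polynomial ℂ → R → R)
    (hD₁ : IsCentroid L k D₁) (hD₂ : IsQC L s D₂) :
    (∀ l m a, ∀ l' b, L.br l' (cComm D₁ D₂ l m a) b = 0) ∧
      ((∀ c : R, (∀ l' b, L.br l' c b = 0) → c = 0) →
        ∀ l m a, cComm D₁ D₂ l m a = 0) := by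
  obtain ⟨hΩ₁, hC⟩ := hD₁
  obtain ⟨hΩ₂, hQ⟩ := hD₂
  have key : ∀ l m a l' b, L.br l' (cComm D₁ D₂ l m a) b = 0 := by
    intro l m a l' b
    obtain ⟨b', rfl⟩ := (hsurj.iterate (k + s)) b
    simp only [cComm]
    set μ := m - l with hμ
    have t1 : L.br l' (D₁ l (D₂ μ a)) ((⇑L.alpha)^[k+s] b')
        = L.br (l' - m) ((⇑L.alpha)^[k] ((⇑L.alpha)^[s] a)) (D₁ l (D₂ μ b')) := by
      have hsplit : (⇑L.alpha)^[k + s] b' = (⇑L.alpha)^[k] ((⇑L.alpha)^[s] b') := by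
        rw [Function.iterate_add_apply]
      rw [hsplit]
      have h1 := (hC (l' - l) l (D₂ μ a) ((⇑L.alpha)^[s] b')).2
      have e1 : l' - l + l = l' := by ring
      rw [e1] at h1
      rw [h1]
      have h2 := hQ (l' - m) μ a b'
      have e2 : l' - m + μ = l' - l := by rw [hμ]; ring
      rw [e2] at h2
      rw [h2]
      have h3 := hC (l' - m) l ((⇑L.alpha)^[s] a) (D₂ μ b')
      rw [← h3.2, h3.1]
    have t2 : L.br l' (D₂ μ (D₁ l a)) ((⇑L.alpha)^[k+s] b')
        = L.br (l' - m) ((⇑L.alpha)^[k] ((⇑L.alpha)^[s] a)) (D₁ l (D₂ μ b')) := by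
      have hsplit2 : (⇑L.alpha)^[k + s] b' = (⇑L.alpha)^[s] ((⇑L.alpha)^[k] b') := by
        rw [add_comm, Function.iterate_add_apply]
      rw [hsplit2]
      have h1 := hQ (l' - μ) μ (D₁ l a) ((⇑L.alpha)^[k] b')
      have e1 : l' - μ + μ = l' := by ring
      rw [e1] at h1
      rw [h1, ← omega_iter' L hΩ₁ s l a, omega_iter' L hΩ₂ k μ b']
      have h2 := (hC (l' - m) l ((⇑L.alpha)^[s] a) (D₂ μ b')).1
      have e2 : l' - m + l = l' - μ := by rw [hμ]; ring
      rw [e2] at h2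
      rw [h2]
    rw [br_sub_left', t1, t2, sub_self]
  exact ⟨key, fun hZ l m a => hZ _ (fun l' b => key l m a l' b)⟩
end

section
/- Let (R, α) be a multiplicative Hom-Lie conformal algebra and set R̆ = R t + R t² (with t³ = 0), with bracket [(a t^i)_λ (b t^j)] = [a_λ b] t^{i+j} (zero if i+j ≥ 3), ᾰ(a t^i) = α(a) t^i, and ∂(a t^i) = (∂a) t^i. Then (R̆, ᾰ) is a multiplicative Hom-Lie conformal algebra. -/
open Polynomial

lemma HLCA.br_zero_left {R : Type*} [AddCommGroup R] [Module (Polynomial ℂ) R]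
    (L : HLCA R) (l : Polynomial ℂ) (b : R) : L.br l 0 b = 0 := by
  have h := L.br_add_left l 0 0 b
  simpa using h.symm

lemma HLCA.br_zero_right {R : Type*} [AddCommGroup R] [Module (Polynomial ℂ) R]
    (L : HLCA R) (l : Polynomial ℂ) (a : R) : L.br l a 0 = 0 := by
  have h := L.br_add_right l a 0 0
  simpa using h.symm

/-- For a multiplicative Hom-Lie conformal algebra `(R, α)`,
`R̆ = Rt + Rt²` (with `t³ = 0`), modelled as `R × R` (first component the
coefficient of `t`, second of `t²`), with bracket
`[(at^i)_λ (bt^j)] = [a_λ b] t^{i+j}` (zero if `i + j ≥ 3`),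
`ᾰ(a t^i) = α(a) t^i` and `∂(a t^i) = (∂a) t^i`, is a multiplicative Hom-Lie
conformal algebra. -/
theorem stmt18 {R : Type*} [AddCommGroup R] [Module (Polynomial ℂ) R]
    (L : HLCA R) (hL : L.Multiplicative) :
    ∃ S : HLCA (R × R),
      S.alpha = L.alpha.prodMap L.alpha ∧
      (∀ l (x y : R × R), S.br l x y = ((0 : R), L.br l x.1 y.1)) ∧
      S.Multiplicative := by
  refine ⟨{
    alpha := L.alpha.prodMap L.alpha
    br := fun l x y => ((0 : R), L.br l x.1 y.1)
    br_add_left := by intro l a a' b; ext <;> simp [L.br_add_left]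
    br_add_right := by intro l a b b'; ext <;> simp [L.br_add_right]
    br_smul_left := by intro l c a b; ext <;> simp [L.br_smul_left]
    br_smul_right := by intro l c a b; ext <;> simp [L.br_smul_right]
    sesq_left := by intro l a b; ext <;> simp [L.sesq_left]
    sesq_right := by intro l a b; ext <;> simp [L.sesq_right]
    skew := by intro l a b; ext <;> simp [← L.skew]
    jacobi := by
      intro l m a b c
      ext <;> simp [L.br_zero_left, L.br_zero_right]
  }, rfl, fun l x y => rfl, ?_⟩
  intro l a b
  refine Prod.ext ?_ (hL l a.1 b.1)
  simp [L.br_zero_left]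
end
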